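/- Let G be a graph, v ∈ V(G) a vertex not lying on any induced odd cycle of G, and k a positive integer. Then G has a minimal odd cycle transversal of size at least k if and only if G − v has a minimal odd cycle transversal of size at least k. -/

import Mathlib

open SimpleGraph

/-- `Z` is an odd cycle transversal: `G − Z` is bipartite. -/
def IsOCT {V : Type*} (G : SimpleGraph V) (Z : Set V) : Prop :=
  (G.induce Zᶜ).Colorable 2

/-- `Z` is a minimal odd cycle transversal. -/
def IsMinOCT {V : Type*} (G : SimpleGraph V) (Z : Set V) : Prop :=
  IsOCT G Z ∧ ∀ Z' ⊂ Z, ¬ IsOCT G Z'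

/-- A closed walk is an induced (chordless) cycle. -/
def IsInducedCycle {V : Type*} (G : SimpleGraph V) {u : V} (c : G.Walk u u) : Prop :=
  c.IsCycle ∧ ∀ x y, x ∈ c.support → y ∈ c.support → G.Adj x y → c.toSubgraph.Adj x y

def GoodFun {V : Type*} (G : SimpleGraph V) (f : V → Fin 2) (W : Set V) : Prop :=
  ∀ ⦃x⦄, x ∈ W → ∀ ⦃y⦄, y ∈ W → G.Adj x y → f x ≠ f y

lemma goodFun_mono {V : Type*} {G : SimpleGraph V} {f : V → Fin 2} {W W' : Set V}
    (h : W' ⊆ W) (hf : GoodFun G f W) : GoodFun G f W' :=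
  fun _ hx _ hy => hf (h hx) (h hy)

lemma colorable_iff_goodFun {V : Type*} (G : SimpleGraph V) (S : Set V) :
    (G.induce S).Colorable 2 ↔ ∃ f, GoodFun G f S := by
  constructor
  · rintro ⟨C⟩
    classical
    refine ⟨fun x => if h : x ∈ S then C ⟨x, h⟩ else 0, ?_⟩
    intro x hx y hy hxy
    simp only [dif_pos hx, dif_pos hy]
    exact C.valid (show (G.induce S).Adj ⟨x, hx⟩ ⟨y, hy⟩ from hxy)
  · rintro ⟨f, hf⟩
    exact ⟨Coloring.mk (fun x => f ↑x) fun {a b} hab => hf a.2 b.2 hab⟩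

lemma colorable2_iff_goodFun {V : Type*} (G : SimpleGraph V) (S : Set V) (T : Set ↥S) :
    ((G.induce S).induce T).Colorable 2 ↔ ∃ f, GoodFun G f (Subtype.val '' T) := by
  constructor
  · rintro ⟨C⟩
    classical
    have mem1 : ∀ {x : V}, x ∈ Subtype.val '' T → x ∈ S := by
      rintro x ⟨y, _, rfl⟩; exact y.2
    have mem2 : ∀ {x : V} (h : x ∈ Subtype.val '' T), (⟨x, mem1 h⟩ : ↥S) ∈ T := by
      rintro x ⟨y, hy, rfl⟩; simpa using hy
    refine ⟨fun x => if h : x ∈ Subtype.val '' T then C ⟨⟨x, mem1 h⟩, mem2 h⟩ else 0, ?_⟩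
    intro x hx y hy hxy
    simp only [dif_pos hx, dif_pos hy]
    exact C.valid (show ((G.induce S).induce T).Adj ⟨⟨x, _⟩, _⟩ ⟨⟨y, _⟩, _⟩ from hxy)
  · rintro ⟨f, hf⟩
    refine ⟨Coloring.mk (fun x => f ↑↑x) fun {a b} hab => ?_⟩
    exact hf ⟨↑a, a.2, rfl⟩ ⟨↑b, b.2, rfl⟩ hab

lemma image_preimage_val {V : Type*} {S Z : Set V} (h : Z ⊆ S) :
    Subtype.val '' (Subtype.val ⁻¹' Z : Set ↥S) = Z := by
  ext x
  constructor
  · rintro ⟨y, hy, rfl⟩; exact hy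
  · intro hx; exact ⟨⟨x, h hx⟩, hx, rfl⟩

lemma image_val_ssubset {V : Type*} {S : Set V} {T U : Set ↥S} (h : T ⊂ U) :
    Subtype.val '' T ⊂ Subtype.val '' U := by
  rw [Set.ssubset_iff_subset_ne] at h ⊢
  exact ⟨Set.image_mono h.1,
    fun he => h.2 ((Set.image_injective.mpr Subtype.coe_injective) he)⟩

lemma set_insert_compl {V : Type*} {v : V} {Y : Set V} (h : v ∉ Y) :
    insert v ((insert v Y)ᶜ) = Yᶜ := by
  ext x
  by_cases hx : x = v
  · subst hx; simp [h]
  · simp [hx]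

lemma set_diff_compl {V : Type*} {v : V} {Z : Set V} (h : v ∈ Z) :
    (Z \ {v})ᶜ = insert v Zᶜ := by
  ext x
  by_cases hx : x = v
  · subst hx; simp [h]
  · simp [hx]

lemma image_val_compl {V : Type*} {v : V} (T : Set (↥({v}ᶜ : Set V))) :
    (Subtype.val '' (Tᶜ : Set (↥({v}ᶜ : Set V))) : Set V)
      = (insert v (Subtype.val '' T))ᶜ := by
  ext x
  constructor
  · rintro ⟨y, hy, rfl⟩
    intro hmem
    rcases Set.mem_insert_iff.mp hmem with h | h
    · exact y.2 h
    · obtain ⟨z, hz, hzy⟩ := h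
      exact hy (Subtype.coe_injective hzy ▸ hz)
  · intro hx
    rw [Set.mem_compl_iff, Set.mem_insert_iff, not_or] at hx
    obtain ⟨hxv, hximg⟩ := hx
    have hxm : x ∈ ({v}ᶜ : Set V) := by simpa using hxv
    refine ⟨⟨x, hxm⟩, fun hmem => hximg ⟨⟨x, hxm⟩, hmem, rfl⟩, rfl⟩


lemma dropUntil_start {V : Type*} [DecidableEq V] {G : SimpleGraph V} {s w : V}
    (p : G.Walk s w) (hu : s ∈ p.support) : p.dropUntil s hu = p := by
  cases p with
  | nil => rfl
  | cons h q => simp [Walk.dropUntil]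

lemma dropUntil_cons_of_ne {V : Type*} [DecidableEq V] {G : SimpleGraph V} {s t w u : V}
    (h : G.Adj s t) (q : G.Walk t w) (hne : s ≠ u) (hu : u ∈ (Walk.cons h q).support)
    (hu' : u ∈ q.support) :
    (Walk.cons h q).dropUntil u hu = q.dropUntil u hu' := by
  simp only [Walk.dropUntil]
  rw [dif_neg hne]

lemma mem_dropUntil_or {V : Type*} [DecidableEq V] {G : SimpleGraph V} {x y : V} (p : G.Walk x y)
    {u z : V} (hu : u ∈ p.support) (hz : z ∈ p.support) :
    z ∈ (p.dropUntil u hu).support ∨ u ∈ (p.dropUntil z hz).support := by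
  induction p with
  | nil =>
    rw [Walk.mem_support_nil_iff] at hu hz
    subst hu; subst hz
    left; exact Walk.start_mem_support _
  | @cons s t w h q ih =>
    by_cases hsu : s = u
    · subst hsu
      rw [dropUntil_start]
      left; exact hz
    · by_cases hsz : s = z
      · subst hsz
        rw [dropUntil_start]
        right; exact hu
      · have hu' : u ∈ q.support := by
          rw [Walk.support_cons] at hu
          rcases List.mem_cons.mp hu with h' | h'
          · exact absurd h'.symm hsu
          · exact h'
        have hz' : z ∈ q.support := by
          rw [Walk.support_cons] at hz
          rcases List.mem_cons.mp hz with h' | h'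
          · exact absurd h'.symm hsz
          · exact h'
        rw [dropUntil_cons_of_ne h q hsu hu hu', dropUntil_cons_of_ne h q hsz hz hz']
        exact ih hu' hz'

lemma edge_mem_of_length_one {V : Type*} {G : SimpleGraph V} {u z : V}
    (w : G.Walk u z) (h : w.length = 1) : s(u, z) ∈ w.edges := by
  cases w with
  | nil => simp at h
  | cons hadj w' =>
    have h0 : w'.length = 0 := by simpa using h
    have := Walk.eq_of_length_eq_zero h0
    subst this
    simp

lemma color_parity {V : Type*} {G : SimpleGraph V} {f : V → Fin 2}
    (hf : ∀ {x y : V}, G.Adj x y → f x ≠ f y) {x y : V} (w : G.Walk x y) :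
    f x = f y ↔ Even w.length := by
  induction w with
  | nil => simp
  | @cons s t w h q ih =>
    have h1 : f s ≠ f t := hf h
    have key : ∀ a b c : Fin 2, a ≠ b → (a = c ↔ ¬ b = c) := by decide
    rw [Walk.length_cons, key _ _ _ h1, ih, Nat.even_add_one]

lemma extend_good {V : Type*} (G : SimpleGraph V) (v : V)
    (hv : ¬ ∃ (u : V) (c : G.Walk u u), IsInducedCycle G c ∧ Odd c.length ∧ v ∈ c.support)
    (W : Set V) (hvW : v ∉ W) (hex : ∃ f, GoodFun G f W) :
    ∃ f, GoodFun G f (insert v W) := by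
  classical
  obtain ⟨f, hf⟩ := hex
  set K := G.induce W with hK
  have hfK : ∀ {x y : ↥W}, K.Adj x y → f ↑x ≠ f ↑y := fun {x y} hxy => hf x.2 y.2 hxy
  by_cases hcase : ∃ a b : ↥W, G.Adj v ↑a ∧ G.Adj v ↑b ∧ f ↑a ≠ f ↑b ∧ K.Reachable a b
  · exfalso
    apply hv
    obtain ⟨a₀, b₀, ha₀, hb₀, hf₀, hr₀⟩ := hcase
    have hP : ∃ n, ∃ (a b : ↥W) (p : K.Walk a b),
        G.Adj v ↑a ∧ G.Adj v ↑b ∧ f ↑a ≠ f ↑b ∧ p.length = n :=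
      ⟨_, a₀, b₀, hr₀.some, ha₀, hb₀, hf₀, rfl⟩
    set n := Nat.find hP with hn
    obtain ⟨a, b, p₀, hva, hvb, hfab, hlen₀⟩ := Nat.find_spec hP
    have hmin : ∀ (a' b' : ↥W) (q : K.Walk a' b'), G.Adj v ↑a' → G.Adj v ↑b' →
        f ↑a' ≠ f ↑b' → n ≤ q.length := fun a' b' q h1 h2 h3 =>
      Nat.find_min' hP ⟨a', b', q, h1, h2, h3, rfl⟩
    set p := p₀.bypass with hpdef
    have hpath : p.IsPath := p₀.bypass_isPath
    have hplen : p.length = n := le_antisymm (le_trans p₀.length_bypass_le (le_of_eq hlen₀)) (hmin a b p hva hvb hfab)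
    -- neighbors of v on p are only the endpoints
    have hnbr : ∀ (x : ↥W), x ∈ p.support → G.Adj v ↑x → x = a ∨ x = b := by
      intro x hx hvx
      have hsum : (p.takeUntil x hx).length + (p.dropUntil x hx).length = p.length := by
        rw [← Walk.length_append, Walk.take_spec]
      by_cases hfx : f ↑x = f ↑a
      · left
        have h3 : f ↑x ≠ f ↑b := hfx ▸ hfab
        have h4 := hmin x b (p.dropUntil x hx) hvx hvb h3
        have h0 : (p.takeUntil x hx).length = 0 := by omega
        exact (Walk.eq_of_length_eq_zero h0).symm
      · right
        have h4 := hmin a x (p.takeUntil x hx) hva hvx (fun h => hfx h.symm)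
        have h0 : (p.dropUntil x hx).length = 0 := by omega
        exact Walk.eq_of_length_eq_zero h0
    -- chords of p are edges of p
    have hchord : ∀ (x y : ↥W), x ∈ p.support → y ∈ p.support → K.Adj x y →
        s(x, y) ∈ p.edges := by
      have key : ∀ (x y : ↥W) (hx : x ∈ p.support) (hy : y ∈ p.support),
          K.Adj x y → y ∈ (p.dropUntil x hx).support → s(x, y) ∈ p.edges := by
        intro x y hx hy hadj hy'
        have hxy : x ≠ y := K.ne_of_adj hadj
        have h1 : ((p.dropUntil x hx).takeUntil y hy').length
            + ((p.dropUntil x hx).dropUntil y hy').length = (p.dropUntil x hx).length := by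
          rw [← Walk.length_append, Walk.take_spec]
        have h2 : (p.takeUntil x hx).length + (p.dropUntil x hx).length = p.length := by
          rw [← Walk.length_append, Walk.take_spec]
        have hq : n ≤ ((p.takeUntil x hx).append
            (Walk.cons hadj ((p.dropUntil x hx).dropUntil y hy'))).length :=
          hmin a b _ hva hvb hfab
        rw [Walk.length_append, Walk.length_cons] at hq
        have hge1 : 1 ≤ ((p.dropUntil x hx).takeUntil y hy').length := by
          rcases Nat.eq_zero_or_pos ((p.dropUntil x hx).takeUntil y hy').length with h0 | h0
          · exact absurd (Walk.eq_of_length_eq_zero h0) hxy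
          · exact h0
        have hone : ((p.dropUntil x hx).takeUntil y hy').length = 1 := by omega
        exact Walk.edges_dropUntil_subset p hx
          (Walk.edges_takeUntil_subset _ hy' (edge_mem_of_length_one _ hone))
      intro x y hx hy hadj
      rcases mem_dropUntil_or p hx hy with h | h
      · exact key x y hx hy hadj h
      · have := key y x hy hx hadj.symm h
        rwa [Sym2.eq_swap] at this
    -- build the cycle
    let ι : K →g G := ⟨Subtype.val, fun {x y} h => h⟩
    have hι : Function.Injective ι := Subtype.val_injective
    set q : G.Walk ↑a ↑b := p.map ι with hqdef
    have hqsup : q.support = p.support.map Subtype.val := Walk.support_map _ _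
    have hvq : v ∉ q.support := by
      rw [hqsup]
      rintro hmem
      obtain ⟨x, _, hx⟩ := List.mem_map.mp hmem
      exact hvW (hx ▸ x.2)
    set r : G.Walk ↑a v := q.append (Walk.cons hvb.symm Walk.nil) with hrdef
    have hrsup : r.support = q.support ++ [v] := by
      rw [hrdef, Walk.support_append]; simp
    have hrpath : r.IsPath := by
      rw [Walk.isPath_def, hrsup]
      rw [List.nodup_append]
      refine ⟨(Walk.map_isPath_of_injective hι hpath).support_nodup, List.nodup_singleton v, ?_⟩
      intro x hx y hx'
      rw [List.mem_singleton] at hx'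
      exact fun hxy => hvq (hx' ▸ hxy ▸ hx)
    have hredges : r.edges = q.edges ++ [s(↑b, v)] := by
      rw [hrdef, Walk.edges_append]; simp
    have hab : (a : V) ≠ ↑b := fun h => hfab (congrArg f h)
    have hedge : s(v, ↑a) ∉ r.edges := by
      rw [hredges]
      intro hmem
      rcases List.mem_append.mp hmem with h | h
      · exact hvq (Walk.fst_mem_support_of_mem_edges q h)
      · rw [List.mem_singleton, Sym2.eq_iff] at h
        rcases h with ⟨h1, _⟩ | ⟨_, h2⟩
        · exact hvW (h1 ▸ (b : ↥W).2)
        · exact hab h2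
    set C : G.Walk v v := Walk.cons hva r with hCdef
    have hCcyc : C.IsCycle := (Walk.cons_isCycle_iff r hva).mpr ⟨hrpath, hedge⟩
    have hClen : C.length = p.length + 2 := by
      rw [hCdef, Walk.length_cons, hrdef, Walk.length_append, hqdef, Walk.length_map]
      simp
    have hodd : Odd C.length := by
      have hne : ¬ Even p.length := fun h => hfab ((color_parity hfK p).mpr h)
      rw [hClen, Nat.odd_iff, Nat.add_mod]
      rw [Nat.even_iff] at hne
      omega
    have hCedges : C.edges = s(v, ↑a) :: (q.edges ++ [s(↑b, v)]) := by
      rw [hCdef, Walk.edges_cons, hredges]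
    have hCsup : ∀ x, x ∈ C.support → x = v ∨ ∃ x' : ↥W, x' ∈ p.support ∧ ↑x' = x := by
      intro x hx
      rw [hCdef, Walk.support_cons] at hx
      rcases List.mem_cons.mp hx with h | h
      · exact Or.inl h
      · rw [hrsup] at h
        rcases List.mem_append.mp h with h | h
        · rw [hqsup] at h
          obtain ⟨x', hx', hxx⟩ := List.mem_map.mp h
          exact Or.inr ⟨x', hx', hxx⟩
        · exact Or.inl (List.mem_singleton.mp h)
    have hCadj : ∀ x y, s(x, y) ∈ C.edges → C.toSubgraph.Adj x y := by
      intro x y h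
      exact (Subgraph.mem_edgeSet).mp ((Walk.mem_edges_toSubgraph C).mpr h)
    have hmem1 : s(v, ↑a) ∈ C.edges := by
      rw [hCedges]; exact List.mem_cons_self
    have hmem2 : s((b : V), v) ∈ C.edges := by
      rw [hCedges]
      exact List.mem_cons_of_mem _ (List.mem_append.mpr (Or.inr (List.mem_singleton.mpr rfl)))
    refine ⟨v, C, ⟨hCcyc, ?_⟩, hodd, Walk.start_mem_support _⟩
    intro x y hxs hys hadj
    rcases hCsup x hxs with rfl | ⟨x', hx', rfl⟩
    · rcases hCsup y hys with rfl | ⟨y', hy', rfl⟩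
      · exact absurd hadj (G.irrefl)
      · rcases hnbr y' hy' hadj with rfl | rfl
        · exact hCadj _ _ hmem1
        · exact (hCadj _ _ hmem2).symm
    · rcases hCsup y hys with rfl | ⟨y', hy', rfl⟩
      · rcases hnbr x' hx' hadj.symm with rfl | rfl
        · exact (hCadj _ _ hmem1).symm
        · exact hCadj _ _ hmem2
      · apply hCadj
        have hpe : s(x', y') ∈ p.edges := hchord x' y' hx' hy' hadj
        have : s((x' : V), (y' : V)) ∈ q.edges := by
          rw [hqdef, Walk.edges_map]
          exact List.mem_map.mpr ⟨s(x', y'), hpe, Sym2.map_pair_eq _ _ _⟩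
        rw [hCedges]
        exact List.mem_cons_of_mem _ (List.mem_append.mpr (Or.inl this))
  · -- flip colors per component
    push_neg at hcase
    set F : ↥W → Prop := fun x => ∃ a : ↥W, G.Adj v ↑a ∧ f ↑a = 0 ∧ K.Reachable a x with hF
    have key1 : ∀ a b : Fin 2, a ≠ b → 1 - a ≠ 1 - b := by decide
    have key2 : ∀ a : Fin 2, a ≠ 0 → a = 1 := by decide
    refine ⟨fun x => if hx : x ∈ W then (if F ⟨x, hx⟩ then 1 - f x else f x) else 0, ?_⟩
    have hnbrval : ∀ (y : V) (hy : y ∈ W), G.Adj v y →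
        (if F ⟨y, hy⟩ then 1 - f y else f y) = 1 := by
      intro y hy hvy
      by_cases hfy : f y = 0
      · rw [if_pos ⟨⟨y, hy⟩, hvy, hfy, Reachable.refl _⟩, hfy]; decide
      · have hfy1 := key2 _ hfy
        rw [if_neg, hfy1]
        rintro ⟨aa, h1, h2, h3⟩
        exact hcase aa ⟨y, hy⟩ h1 hvy (by rw [h2, hfy1]; decide) h3
    intro x hx y hy hxy
    rcases Set.mem_insert_iff.mp hx with rfl | hxW
    · rcases Set.mem_insert_iff.mp hy with rfl | hyW
      · exact absurd hxy (G.irrefl)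
      · simp only [dif_neg hvW, dif_pos hyW]
        rw [hnbrval y hyW hxy]
        decide
    · rcases Set.mem_insert_iff.mp hy with rfl | hyW
      · simp only [dif_neg hvW, dif_pos hxW]
        rw [hnbrval x hxW hxy.symm]
        decide
      · simp only [dif_pos hxW, dif_pos hyW]
        have hKadj : K.Adj ⟨x, hxW⟩ ⟨y, hyW⟩ := hxy
        have hFiff : F ⟨x, hxW⟩ ↔ F ⟨y, hyW⟩ := by
          constructor
          · rintro ⟨aa, h1, h2, h3⟩; exact ⟨aa, h1, h2, h3.trans hKadj.reachable⟩
          · rintro ⟨aa, h1, h2, h3⟩; exact ⟨aa, h1, h2, h3.trans hKadj.symm.reachable⟩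
        have hfne : f x ≠ f y := hf hxW hyW hxy
        by_cases hFx : F ⟨x, hxW⟩
        · rw [if_pos hFx, if_pos (hFiff.mp hFx)]
          exact key1 _ _ hfne
        · rw [if_neg hFx, if_neg (fun h => hFx (hFiff.mpr h))]
          exact hfne


theorem stmt15 {V : Type*} [Fintype V] (G : SimpleGraph V) (v : V) (k : ℕ) (hk : 0 < k)
    (hv : ¬ ∃ (u : V) (c : G.Walk u u), IsInducedCycle G c ∧ Odd c.length ∧ v ∈ c.support) :
    (∃ Z : Set V, IsMinOCT G Z ∧ k ≤ Z.ncard) ↔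
      (∃ Z' : Set ↥({v}ᶜ : Set V), IsMinOCT (G.induce ({v}ᶜ : Set V)) Z' ∧ k ≤ Z'.ncard) := by
  have hbridge : ∀ T : Set (↥({v}ᶜ : Set V)),
      IsOCT (G.induce ({v}ᶜ : Set V)) T ↔ IsOCT G (Subtype.val '' T) := by
    intro T
    have hvT : v ∉ Subtype.val '' T := by rintro ⟨y, _, hyv⟩; exact y.2 hyv
    have h1 : IsOCT (G.induce ({v}ᶜ : Set V)) T ↔
        ∃ f, GoodFun G f ((insert v (Subtype.val '' T))ᶜ) := by
      rw [← image_val_compl T]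
      exact colorable2_iff_goodFun G _ _
    have h2 : IsOCT G (Subtype.val '' T) ↔ ∃ f, GoodFun G f ((Subtype.val '' T)ᶜ) :=
      colorable_iff_goodFun G _
    rw [h1, h2]
    constructor
    · rintro ⟨f, hf⟩
      have hvc : v ∉ ((insert v (Subtype.val '' T))ᶜ : Set V) := fun h => h (Set.mem_insert _ _)
      have := extend_good G v hv _ hvc ⟨f, hf⟩
      rwa [set_insert_compl hvT] at this
    · rintro ⟨f, hf⟩
      exact ⟨f, goodFun_mono (Set.compl_subset_compl.mpr (Set.subset_insert _ _)) hf⟩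
  constructor
  · rintro ⟨Z, ⟨hZoct, hZmin⟩, hcard⟩
    have hvZ : v ∉ Z := by
      intro hvZ
      apply hZmin (Z \ {v}) (Set.sdiff_singleton_ssubset.mpr hvZ)
      have h1 : ∃ f, GoodFun G f Zᶜ := (colorable_iff_goodFun G Zᶜ).mp hZoct
      have h2 := extend_good G v hv Zᶜ (fun h => h hvZ) h1
      have h3 : insert v Zᶜ = (Z \ {v})ᶜ := (set_diff_compl hvZ).symm
      exact (colorable_iff_goodFun G _).mpr (h3 ▸ h2)
    have hZsub : Z ⊆ ({v}ᶜ : Set V) := Set.subset_compl_singleton_iff.mpr hvZ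
    have himgZ : Subtype.val '' (Subtype.val ⁻¹' Z : Set ↥({v}ᶜ : Set V)) = Z :=
      image_preimage_val hZsub
    refine ⟨Subtype.val ⁻¹' Z, ⟨?_, ?_⟩, ?_⟩
    · exact (hbridge _).mpr (by rwa [himgZ])
    · intro T hT hToct
      refine hZmin (Subtype.val '' T) ?_ ((hbridge T).mp hToct)
      rw [← himgZ]
      exact image_val_ssubset hT
    · rwa [← himgZ, Set.ncard_image_of_injective _ Subtype.coe_injective] at hcard
  · rintro ⟨Z', ⟨h1, h2⟩, hcard⟩
    refine ⟨Subtype.val '' Z', ⟨(hbridge Z').mp h1, ?_⟩, ?_⟩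
    · intro Y hY hYoct
      have hYsub : Y ⊆ ({v}ᶜ : Set V) := hY.subset.trans (by rintro x ⟨y, _, rfl⟩; exact y.2)
      have himgY : Subtype.val '' (Subtype.val ⁻¹' Y : Set ↥({v}ᶜ : Set V)) = Y :=
        image_preimage_val hYsub
      refine h2 (Subtype.val ⁻¹' Y) ?_ ((hbridge _).mpr (by rwa [himgY]))
      rw [Set.ssubset_iff_subset_ne]
      constructor
      · intro x hx
        obtain ⟨y, hy, hyx⟩ := hY.subset hx
        exact (Subtype.coe_injective hyx) ▸ hy
      · intro he
        refine hY.2 ?_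
        intro x hx
        obtain ⟨y, hy, rfl⟩ := hx
        have : y ∈ Subtype.val ⁻¹' Y := he ▸ hy
        exact this
    · rwa [Set.ncard_image_of_injective _ Subtype.coe_injective]
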